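/- arXiv:1807.04930 — 3 statements merged into one kernel-verified Lean document; each statement's English description precedes it below -/
import Mathlib

section
/- Let Q be a complex number with Re(Q) > 0 and let U = { y ∈ ℂ : Re(y) > 0 and |y| < 1/Re(Q) }. If y_1, …, y_d ∈ U and y = 1/(Q + Σ_{i=1}^d y_i), then y ∈ U, and moreover Re(y) ≥ Re(Q) / (|Q| + d/Re(Q))². -/
theorem stmt2 (Q : ℂ) (hQ : 0 < Q.re) (d : ℕ) (hd : 1 ≤ d) (y : Fin d → ℂ)
    (hy : ∀ i, 0 < (y i).re ∧ ‖y i‖ < 1 / Q.re) :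
    (0 < (1 / (Q + ∑ i, y i)).re ∧ ‖1 / (Q + ∑ i, y i)‖ < 1 / Q.re) ∧
      Q.re / (‖Q‖ + d / Q.re) ^ 2 ≤ (1 / (Q + ∑ i, y i)).re := by
  set S : ℂ := Q + ∑ i, y i with hS
  have hne : (Finset.univ : Finset (Fin d)).Nonempty := by
    have : Nonempty (Fin d) := ⟨⟨0, hd⟩⟩
    exact Finset.univ_nonempty
  have hsum : 0 < (∑ i, y i).re := by
    rw [Complex.re_sum]
    exact Finset.sum_pos (fun i _ => (hy i).1) hne
  have hSre' : Q.re < S.re := by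
    simp only [hS, Complex.add_re]; linarith
  have hSre : Q.re ≤ S.re := hSre'.le
  have hSrepos : 0 < S.re := lt_trans hQ hSre'
  have hS0 : S ≠ 0 := fun h => by simp [h] at hSrepos
  have habsS : 0 < ‖S‖ := norm_pos_iff.mpr hS0
  have hreabs : Q.re < ‖S‖ :=
    lt_of_lt_of_le hSre' (Complex.re_le_norm S)
  have hinvre : (1 / S).re = S.re / Complex.normSq S := by
    rw [one_div, Complex.inv_re]
  have hnormsqpos : 0 < Complex.normSq S := Complex.normSq_pos.mpr hS0
  have habsbound : ‖S‖ ≤ ‖Q‖ + d / Q.re := by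
    have h1 : ‖S‖ ≤ ‖Q‖ + ‖∑ i, y i‖ := by
      simpa [hS] using norm_add_le Q (∑ i, y i)
    have h2 : ‖∑ i, y i‖ ≤ ∑ i, ‖y i‖ := by
      exact norm_sum_le _ _
    have h3 : ∑ i, ‖y i‖ ≤ (d : ℝ) * (1 / Q.re) := by
      calc ∑ i, ‖y i‖ ≤ ∑ _i : Fin d, (1 / Q.re) :=
            Finset.sum_le_sum fun i _ => (hy i).2.le
        _ = (d : ℝ) * (1 / Q.re) := by simp [mul_comm]
    have : (d : ℝ) * (1 / Q.re) = d / Q.re := by field_simp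
    linarith
  constructor
  · constructor
    · rw [hinvre]; positivity
    · rw [norm_div, norm_one]
      exact one_div_lt_one_div_of_lt hQ hreabs
  · rw [hinvre]
    have hB : 0 < ‖Q‖ + d / Q.re := by
      have : 0 < (d : ℝ) / Q.re := by positivity
      have := norm_nonneg Q
      linarith
    have hnsq : Complex.normSq S ≤ (‖Q‖ + d / Q.re) ^ 2 := by
      rw [← Complex.sq_norm]
      exact pow_le_pow_left₀ habsS.le habsbound 2
    exact div_le_div₀ hSrepos.le hSre (by positivity) hnsq
end

section
/- For integer Δ ≥ 3 and γ = −1/(4(Δ−1)(cos θ)²) with θ ∈ (0, π/2) not a rational multiple of π, define sequences by u_0 = z_0 = 1 and, for n ≥ 1, u_n = z_{n−1}^{Δ−1} and z_n = z_{n−1}^{Δ−1} + (Δ−1)γ z_{n−1}^{Δ−2} u_{n−1}. Then for all n ≥ 0, z_n ≠ 0 and u_n/z_n = 2cos(θ) · sin((n+1)θ)/sin((n+2)θ). -/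
open Real in
theorem stmt13 (Δ : ℕ) (hΔ : 3 ≤ Δ) (θ : ℝ) (hθ₀ : 0 < θ) (hθ₁ : θ < π / 2)
    (hirr : ∀ q : ℚ, θ ≠ (q : ℝ) * π) (γ : ℝ)
    (hγ : γ = -1 / (4 * ((Δ : ℝ) - 1) * (Real.cos θ) ^ 2))
    (u z : ℕ → ℝ) (hu0 : u 0 = 1) (hz0 : z 0 = 1)
    (hu : ∀ n : ℕ, u (n + 1) = z n ^ (Δ - 1))
    (hz : ∀ n : ℕ, z (n + 1) = z n ^ (Δ - 1) + ((Δ : ℝ) - 1) * γ * z n ^ (Δ - 2) * u n) :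
    ∀ n : ℕ, z n ≠ 0 ∧
      u n / z n = 2 * Real.cos θ * (Real.sin ((n + 1) * θ) / Real.sin ((n + 2) * θ)) := by
  have hπ := Real.pi_pos
  have hcos : 0 < Real.cos θ := Real.cos_pos_of_mem_Ioo ⟨by linarith, hθ₁⟩
  have hsin : ∀ k : ℕ, 0 < k → Real.sin ((k : ℝ) * θ) ≠ 0 := by
    intro k hk h
    rw [Real.sin_eq_zero_iff] at h
    obtain ⟨m, hm⟩ := h
    apply hirr ((m : ℚ) / (k : ℚ))
    have hk' : (k : ℝ) ≠ 0 := by positivity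
    push_cast
    field_simp
    linarith [hm]
  have hΔ1 : ((Δ : ℝ) - 1) ≠ 0 := by
    have : (3 : ℝ) ≤ (Δ : ℝ) := by exact_mod_cast hΔ
    linarith
  intro n
  induction n with
  | zero =>
    constructor
    · rw [hz0]; norm_num
    · rw [hu0, hz0]
      have h2 : Real.sin (((0:ℕ) + 2 : ℝ) * θ) = 2 * Real.cos θ * Real.sin θ := by
        norm_num
        rw [two_mul, Real.sin_add]
        ring
      have hs2 : Real.sin (((0:ℕ) + 2 : ℝ) * θ) ≠ 0 := by
        have := hsin 2 (by norm_num); push_cast at this ⊢; (convert this using 3; norm_num)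
      rw [h2] at hs2 ⊢
      have hsθ : Real.sin θ ≠ 0 := by
        intro h; apply hs2; rw [h]; ring
      norm_num
      field_simp
  | succ n ih =>
    obtain ⟨hzn, hr⟩ := ih
    set s1 := Real.sin (((n : ℝ) + 1) * θ) with hs1def
    set s2 := Real.sin (((n : ℝ) + 2) * θ) with hs2def
    set s3 := Real.sin (((n : ℝ) + 3) * θ) with hs3def
    have hs1 : s1 ≠ 0 := by
      have := hsin (n + 1) (by omega); push_cast at this; exact this
    have hs2 : s2 ≠ 0 := by
      have := hsin (n + 2) (by omega); push_cast at this; exact this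
    have hs3 : s3 ≠ 0 := by
      have := hsin (n + 3) (by omega); push_cast at this; exact this
    have htrig : s3 = 2 * Real.cos θ * s2 - s1 := by
      rw [hs1def, hs2def, hs3def,
        show ((n : ℝ) + 3) * θ = ((n : ℝ) + 2) * θ + θ by ring,
        show ((n : ℝ) + 1) * θ = ((n : ℝ) + 2) * θ - θ by ring,
        Real.sin_add, Real.sin_sub]
      ring
    have hun : u n = (2 * Real.cos θ * (s1 / s2)) * z n := by
      have := hr
      field_simp at this ⊢
      linarith [this]
    have hE : z (n + 1) = z n ^ (Δ - 1) * (s3 / (2 * Real.cos θ * s2)) := by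
      rw [hz n, hun, hγ]
      have hpow : z n ^ (Δ - 1) = z n ^ (Δ - 2) * z n := by
        rw [← pow_succ]; congr 1; omega
      rw [hpow, htrig]
      have hc : Real.cos θ ≠ 0 := ne_of_gt hcos
      field_simp
      ring
    have hzne : z (n + 1) ≠ 0 := by
      rw [hE]
      apply mul_ne_zero (pow_ne_zero _ hzn)
      apply div_ne_zero hs3
      positivity
    refine ⟨hzne, ?_⟩
    rw [hu n, hE]
    have hc : Real.cos θ ≠ 0 := ne_of_gt hcos
    have hzp : z n ^ (Δ - 1) ≠ 0 := pow_ne_zero _ hzn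
    push_cast
    rw [show ((n : ℝ) + 1 + 1) * θ = ((n : ℝ) + 2) * θ by ring,
      show ((n : ℝ) + 1 + 2) * θ = ((n : ℝ) + 3) * θ by ring, ← hs2def, ← hs3def]
    field_simp
end

section
/- Let θ ∈ (0, π/2) be such that θ/π is irrational. Then the sequence W_n = sin((n+1)θ)/sin((n+2)θ), n = 0, 1, 2, …, is dense in ℝ. -/
open Real

lemma nsmul_dense (θ : ℝ) (hirr : Irrational (θ / π)) :
    DenseRange (fun n : ℕ => n • ((θ : ℝ) : AddCircle π)) := by
  haveI : Fact (0 < π) := ⟨pi_pos⟩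
  rw [← denseRange_zsmul_iff_nsmul]
  have hS : Dense ((AddSubgroup.closure {θ, π} : AddSubgroup ℝ) : Set ℝ) := by
    rcases AddSubgroup.dense_or_cyclic (AddSubgroup.closure {θ, π}) with h | ⟨a, ha⟩
    · exact h
    · exfalso
      have hθ : θ ∈ AddSubgroup.closure ({θ, π} : Set ℝ) :=
        AddSubgroup.subset_closure (by simp)
      have hπ : π ∈ AddSubgroup.closure ({θ, π} : Set ℝ) :=
        AddSubgroup.subset_closure (by simp)
      rw [ha, AddSubgroup.mem_closure_singleton] at hθ hπ
      obtain ⟨m, hm⟩ := hθ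
      obtain ⟨k, hk⟩ := hπ
      have ha0 : a ≠ 0 := by
        rintro rfl
        rw [smul_zero] at hk
        exact pi_ne_zero hk.symm
      have hk0 : (k : ℝ) ≠ 0 := by
        rintro h
        rw [zsmul_eq_mul, h, zero_mul] at hk
        exact pi_ne_zero hk.symm
      have hval : θ / π = ((m : ℝ)) / k := by
        rw [← hm, ← hk, zsmul_eq_mul, zsmul_eq_mul, mul_comm (m : ℝ) a,
          mul_comm (k : ℝ) a, mul_div_mul_left _ _ ha0]
      refine hirr ⟨(m / k : ℚ), ?_⟩
      rw [hval]; push_cast; ring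
  have hcont : Continuous ((↑) : ℝ → AddCircle π) := continuous_quotient_mk'
  have hsurj : Function.Surjective ((↑) : ℝ → AddCircle π) := Quotient.mk''_surjective
  refine ((hsurj.denseRange).dense_image hcont hS).mono ?_
  rintro _ ⟨s, hs, rfl⟩
  rw [SetLike.mem_coe, AddSubgroup.mem_closure_pair] at hs
  obtain ⟨m, k, rfl⟩ := hs
  refine ⟨m, ?_⟩
  have h1 : ((k • π : ℝ) : AddCircle π) = 0 := by
    rw [AddCircle.coe_zsmul, AddCircle.coe_period, smul_zero]
  rw [AddCircle.coe_add, h1, add_zero, AddCircle.coe_zsmul]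

open Real in
theorem stmt15 (θ : ℝ) (hθ₀ : 0 < θ) (hθ₁ : θ < π / 2) (hirr : Irrational (θ / π)) :
    ∀ x : ℝ, ∀ ε > (0 : ℝ), ∃ n : ℕ,
      |Real.sin ((n + 1) * θ) / Real.sin ((n + 2) * θ) - x| < ε := by
  intro x ε hε
  haveI : Fact (0 < π) := ⟨pi_pos⟩
  have hθπ : θ < π := hθ₁.trans (by linarith [pi_pos])
  have hsθ : 0 < sin θ := sin_pos_of_pos_of_lt_pi hθ₀ hθπ
  -- find a root β of sin (β - θ) = x * sin β in (0, π)
  set g : ℝ → ℝ := fun b => sin (b - θ) - x * sin b with hg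
  have hg0 : g 0 = -sin θ := by simp [hg]
  have hgπ : g π = sin θ := by simp [hg, sin_pi_sub]
  have hgc : ContinuousOn g (Set.Icc 0 π) := by fun_prop
  have hiv := intermediate_value_Icc pi_pos.le hgc
  have h0mem : (0 : ℝ) ∈ Set.Icc (g 0) (g π) := by
    rw [hg0, hgπ]; constructor <;> linarith
  obtain ⟨β, hβmem, hβroot⟩ := hiv h0mem
  have hβ0 : 0 < β := by
    rcases lt_or_eq_of_le hβmem.1 with h | h
    · exact h
    · exfalso; rw [← h] at hβroot; rw [hg0] at hβroot; linarith
  have hβπ : β < π := by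
    rcases lt_or_eq_of_le hβmem.2 with h | h
    · exact h
    · exfalso; rw [h] at hβroot; rw [hgπ] at hβroot; linarith
  have hsβ : 0 < sin β := sin_pos_of_pos_of_lt_pi hβ0 hβπ
  -- F is continuous at β with F β = x
  set F : ℝ → ℝ := fun b => sin (b - θ) / sin b with hF
  have hFβ : F β = x := by
    have : sin (β - θ) = x * sin β := by
      have := hβroot; simp only [hg] at this; linarith
    rw [hF]; simp only; rw [this, mul_div_assoc, div_self hsβ.ne', mul_one]
  have hFc : ContinuousAt F β := by
    apply ContinuousAt.div
    · fun_prop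
    · fun_prop
    · exact hsβ.ne'
  obtain ⟨δ, hδ0, hδ⟩ := Metric.continuousAt_iff.mp hFc ε hε
  -- use density
  obtain ⟨n, hn⟩ := (nsmul_dense θ hirr).exists_dist_lt ((β - 2 * θ : ℝ) : AddCircle π) hδ0
  -- extract an integer k with |((n+2)θ + kπ) - β| < δ
  have hn' : ‖(((β - 2 * θ) - n * θ : ℝ) : AddCircle π)‖ < δ := by
    rw [dist_eq_norm] at hn
    have : ((β - 2 * θ : ℝ) : AddCircle π) - n • ((θ : ℝ) : AddCircle π)
        = (((β - 2 * θ) - n * θ : ℝ) : AddCircle π) := by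
      rw [← AddCircle.coe_nsmul, nsmul_eq_mul, ← AddCircle.coe_sub]
    rw [← this]; exact hn
  rw [AddCircle.norm_eq] at hn'
  set u : ℝ := (β - 2 * θ) - n * θ with hu
  set k : ℤ := round (π⁻¹ * u) with hk
  set b : ℝ := (n + 2) * θ + k * π with hb
  have hbβ : |b - β| < δ := by
    have : b - β = -(u - k * π) := by rw [hb, hu]; ring
    rw [this, abs_neg]; exact hn'
  refine ⟨n, ?_⟩
  have hne : ((-1 : ℝ) ^ (-k : ℤ)) ≠ 0 := zpow_ne_zero _ (by norm_num)
  have h2 : sin ((n + 2) * θ) = (-1 : ℝ) ^ (-k : ℤ) * sin b := by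
    have : ((n : ℝ) + 2) * θ = b + (-k : ℤ) * π := by rw [hb]; push_cast; ring
    rw [this, sin_add_int_mul_pi]
  have h1 : sin ((n + 1) * θ) = (-1 : ℝ) ^ (-k : ℤ) * sin (b - θ) := by
    have : ((n : ℝ) + 1) * θ = (b - θ) + (-k : ℤ) * π := by rw [hb]; push_cast; ring
    rw [this, sin_add_int_mul_pi]
  rw [h1, h2, mul_div_mul_left _ _ hne]
  have := hδ (show dist b β < δ by rwa [Real.dist_eq])
  rw [hFβ] at this
  rw [Real.dist_eq] at this
  exact this
end
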